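/- Let M be a symmetric irreducible n×n matrix and φ a nowhere-zero eigenvector for eigenvalue λ of index k and multiplicity r. Let ν_+ (resp. ν_-) be the cyclomatic number of the subgraph of the graph of M on edges where M_{ij} φ(i) φ(j) > 0 (resp. < 0), and ν the cyclomatic number of the full graph of M. Then the number of connected components of the graph on [n] with edges {(i,j): M_{ij} φ(i)φ(j) < 0} is at least k + (r-1) - ν + ν_+ + ν_-. -/

import Mathlib

open Matrix

noncomputable def graphOf {n : ℕ} (M : Matrix (Fin n) (Fin n) ℝ) : SimpleGraph (Fin n) :=
  SimpleGraph.fromRel (fun i j => M i j ≠ 0)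

/-- Cyclomatic number of a graph: `e - n + c` where `c` is the number of connected
components. -/
noncomputable def cyclo {n : ℕ} (G : SimpleGraph (Fin n)) : ℤ :=
  (G.edgeSet.ncard : ℤ) - n + Nat.card G.ConnectedComponent

noncomputable def posGraph {n : ℕ} (M : Matrix (Fin n) (Fin n) ℝ) (φ : Fin n → ℝ) :
    SimpleGraph (Fin n) :=
  SimpleGraph.fromRel (fun i j => 0 < M i j * φ i * φ j)

noncomputable def negGraph {n : ℕ} (M : Matrix (Fin n) (Fin n) ℝ) (φ : Fin n → ℝ) :
    SimpleGraph (Fin n) :=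
  SimpleGraph.fromRel (fun i j => M i j * φ i * φ j < 0)

/-- The key spectral estimate: the number of sign components is at most
`n + 1 - #{eigenvalues ≤ λ}`. -/
theorem aux_spectral {n : ℕ} (hn : 0 < n) {M : Matrix (Fin n) (Fin n) ℝ}
    (hM : M.IsHermitian) (hirr : (graphOf M).Connected)
    (lam : ℝ) (φ : Fin n → ℝ) (hφ : ∀ i, φ i ≠ 0)
    (heig : M.mulVec φ = lam • φ) :
    Nat.card (posGraph M φ).ConnectedComponent
      + (Finset.univ.filter (fun i => hM.eigenvalues i ≤ lam)).card ≤ n + 1 := by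
  classical
  have hsymm : ∀ i j, M j i = M i j := by
    intro i j
    have := congrFun (congrFun hM j) i
    simpa [conjTranspose_apply] using this.symm
  have heig' : ∀ i, ∑ j, M i j * φ j = lam * φ i := by
    intro i
    have := congrFun heig i
    simpa [Matrix.mulVec, dotProduct, smul_eq_mul] using this
  set G := posGraph M φ with hG
  letI : Fintype G.ConnectedComponent := Fintype.ofFinite _
  set Q : Fin n → G.ConnectedComponent := fun i => G.connectedComponentMk i with hQdef
  have hcross : ∀ i j, Q i ≠ Q j → M i j * φ i * φ j ≤ 0 := by
    intro i j hQ
    by_contra h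
    push_neg at h
    have hne : i ≠ j := by rintro rfl; exact hQ rfl
    have hadj : G.Adj i j := by
      rw [hG]
      simp only [posGraph, SimpleGraph.fromRel_adj]
      exact ⟨hne, Or.inl h⟩
    exact hQ (SimpleGraph.ConnectedComponent.sound hadj.reachable)
  -- the linear map whose range is W
  let T : (G.ConnectedComponent → ℝ) →ₗ[ℝ] EuclideanSpace ℝ (Fin n) :=
    { toFun := fun a => (WithLp.toLp 2 (fun i => a (Q i) * φ i) : EuclideanSpace ℝ (Fin n))
      map_add' := by
        intro a c
        ext i
        show (a (Q i) + c (Q i)) * φ i = a (Q i) * φ i + c (Q i) * φ i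
        ring
      map_smul' := by
        intro t a
        ext i
        show (t * a (Q i)) * φ i = t * (a (Q i) * φ i)
        ring }
  have hTapp : ∀ (a : G.ConnectedComponent → ℝ) (i : Fin n), T a i = a (Q i) * φ i :=
    fun a i => rfl
  have hTinj : Function.Injective T := by
    rw [← LinearMap.ker_eq_bot, Submodule.eq_bot_iff]
    intro a ha
    rw [LinearMap.mem_ker] at ha
    funext c
    induction c using SimpleGraph.ConnectedComponent.ind with
    | _ i =>
      have h0 : T a i = 0 := by rw [ha]; rfl
      rw [hTapp] at h0
      have := mul_eq_zero.1 h0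
      rcases this with h | h
      · exact h
      · exact absurd h (hφ i)
  set W := LinearMap.range T with hW
  set b := hM.eigenvectorBasis with hb
  set Sf : Finset (Fin n) := Finset.univ.filter (fun i => hM.eigenvalues i ≤ lam) with hSf
  let v : {i // i ∈ Sf} → EuclideanSpace ℝ (Fin n) := fun s => b s.val
  set V := Submodule.span ℝ (Set.range v) with hV
  have hvon : Orthonormal ℝ v := b.orthonormal.comp _ Subtype.val_injective
  have hdimV : Module.finrank ℝ V = Sf.card := by
    rw [hV, finrank_span_eq_card hvon.linearIndependent, Fintype.card_coe]
  have hdimW : Module.finrank ℝ W = Fintype.card G.ConnectedComponent := by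
    rw [hW, LinearMap.finrank_range_of_inj hTinj, Module.finrank_fintype_fun_eq_card]
  -- quadratic form
  set F : EuclideanSpace ℝ (Fin n) → ℝ := fun x => ∑ i, ∑ j, M i j * x i * x j with hFdef
  set Nq : EuclideanSpace ℝ (Fin n) → ℝ := fun x => ∑ i, (x i)^2 with hNdef
  -- V-side
  have hinner0 : ∀ x ∈ V, ∀ j ∉ Sf, inner ℝ (b j) x = (0:ℝ) := by
    intro x hx j hj
    induction hx using Submodule.span_induction with
    | mem y hy =>
      obtain ⟨s, rfl⟩ := hy
      have hne : j ≠ s.val := fun hc => hj (hc ▸ s.property)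
      exact b.orthonormal.2 hne
    | zero => exact inner_zero_right _
    | add y z _ _ hy hz => rw [inner_add_right, hy, hz, add_zero]
    | smul t y _ hy => rw [inner_smul_right, hy, mul_zero]
  have hrepr0 : ∀ x ∈ V, ∀ j ∉ Sf, b.repr x j = 0 := by
    intro x hx j hj
    rw [b.repr_apply_apply]
    exact hinner0 x hx j hj
  have hMsym := (isHermitian_iff_isSymmetric.1 hM)
  have hbeig : ∀ j, toEuclideanLin M (b j) = hM.eigenvalues j • b j := by
    intro j
    ext i
    have := congrFun (hM.mulVec_eigenvectorBasis j) i
    simpa [toEuclideanLin_apply] using this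
  have hreprM : ∀ (x : EuclideanSpace ℝ (Fin n)) (j : Fin n),
      b.repr (toEuclideanLin M x) j = hM.eigenvalues j * b.repr x j := by
    intro x j
    rw [b.repr_apply_apply, b.repr_apply_apply]
    rw [← hMsym (b j) x, hbeig j, inner_smul_left]
    simp
  have hparseval : ∀ x y : EuclideanSpace ℝ (Fin n),
      (inner ℝ x y : ℝ) = ∑ j, b.repr x j * b.repr y j := by
    intro x y
    have h := b.repr.inner_map_map x y
    simp only [PiLp.inner_apply, RCLike.inner_apply, conj_trivial] at h ⊢
    rw [h.symm]; exact Finset.sum_congr rfl fun j _ => mul_comm _ _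
  have hFinner : ∀ x : EuclideanSpace ℝ (Fin n), F x = inner ℝ x (toEuclideanLin M x) := by
    intro x
    rw [hFdef]
    simp only [PiLp.inner_apply, RCLike.inner_apply, conj_trivial, toEuclideanLin_apply]
    refine Finset.sum_congr rfl fun i _ => ?_
    show ∑ j, M i j * x i * x j = ((M *ᵥ (fun j => x j)) i) * x i
    rw [Matrix.mulVec, dotProduct, Finset.sum_mul]
    exact Finset.sum_congr rfl fun j _ => by ring
  have hNinner : ∀ x : EuclideanSpace ℝ (Fin n), Nq x = inner ℝ x x := by
    intro x
    rw [hNdef]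
    simp only [PiLp.inner_apply, RCLike.inner_apply, conj_trivial]
    exact Finset.sum_congr rfl fun i _ => by ring
  have hVbound : ∀ x ∈ V, F x ≤ lam * Nq x := by
    intro x hx
    have h1 : F x = ∑ j, hM.eigenvalues j * (b.repr x j)^2 := by
      rw [hFinner, hparseval]
      exact Finset.sum_congr rfl fun j _ => by rw [hreprM]; ring
    have h2 : Nq x = ∑ j, (b.repr x j)^2 := by
      rw [hNinner, hparseval]
      exact Finset.sum_congr rfl fun j _ => by ring
    rw [h1, h2, Finset.mul_sum]
    refine Finset.sum_le_sum fun j _ => ?_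
    by_cases hj : j ∈ Sf
    · have hle : hM.eigenvalues j ≤ lam := by
        rw [hSf] at hj; exact (Finset.mem_filter.1 hj).2
      nlinarith [sq_nonneg (b.repr x j)]
    · rw [hrepr0 x hx j hj]
      simp
  -- W-side: key identity
  have hterm : ∀ (a : G.ConnectedComponent → ℝ) (i j : Fin n),
      0 ≤ (a (Q i) - a (Q j))^2 * (-(M i j * φ i * φ j)) := by
    intro a i j
    by_cases hQ : Q i = Q j
    · rw [hQ]; simp
    · have := hcross i j hQ
      nlinarith [sq_nonneg (a (Q i) - a (Q j))]
  have hWkey : ∀ a : G.ConnectedComponent → ℝ,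
      F (T a) = lam * Nq (T a)
        + (1/2) * ∑ i, ∑ j, (a (Q i) - a (Q j))^2 * (-(M i j * φ i * φ j)) := by
    intro a
    have hA : ∀ (c : Fin n → ℝ) (i : Fin n),
        ∑ j, c i * (M i j * φ i * φ j) = c i * (lam * φ i * φ i) := by
      intro c i
      rw [← Finset.mul_sum]
      congr 1
      have : ∑ j, M i j * φ i * φ j = φ i * ∑ j, M i j * φ j := by
        rw [Finset.mul_sum]
        exact Finset.sum_congr rfl fun j _ => by ring
      rw [this, heig' i]; ring
    have e1 : ∑ i, ∑ j, (a (Q i))^2 * (M i j * φ i * φ j) = lam * Nq (T a) := by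
      rw [hNdef]
      have : ∀ i, ∑ j, (a (Q i))^2 * (M i j * φ i * φ j)
          = (a (Q i))^2 * (lam * φ i * φ i) := fun i => hA (fun i => (a (Q i))^2) i
      rw [Finset.sum_congr rfl fun i _ => this i]
      simp only [Finset.mul_sum]
      exact Finset.sum_congr rfl fun i _ => by rw [hTapp]; ring
    have e2 : ∑ i, ∑ j, (a (Q j))^2 * (M i j * φ i * φ j) = lam * Nq (T a) := by
      rw [Finset.sum_comm]
      rw [← e1]
      exact Finset.sum_congr rfl fun j _ => Finset.sum_congr rfl fun i _ => by
        rw [hsymm i j]; ring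
    have e3 : ∑ i, ∑ j, M i j * (a (Q i) * φ i) * (a (Q j) * φ j) = F (T a) := by
      rw [hFdef]
      exact Finset.sum_congr rfl fun i _ => Finset.sum_congr rfl fun j _ => by
        rw [hTapp, hTapp]
    have expand : ∑ i, ∑ j, (a (Q i) - a (Q j))^2 * (-(M i j * φ i * φ j))
        = 2 * (∑ i, ∑ j, M i j * (a (Q i) * φ i) * (a (Q j) * φ j))
          - (∑ i, ∑ j, (a (Q i))^2 * (M i j * φ i * φ j))
          - (∑ i, ∑ j, (a (Q j))^2 * (M i j * φ i * φ j)) := by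
      rw [Finset.mul_sum, ← Finset.sum_sub_distrib, ← Finset.sum_sub_distrib]
      refine Finset.sum_congr rfl fun i _ => ?_
      rw [Finset.mul_sum, ← Finset.sum_sub_distrib, ← Finset.sum_sub_distrib]
      exact Finset.sum_congr rfl fun j _ => by ring
    rw [expand, e1, e2, e3]
    ring
  -- W ⊓ V is contained in the span of φ
  have hinf : W ⊓ V ≤ Submodule.span ℝ {T (fun _ => (1:ℝ))} := by
    intro x hx
    rw [Submodule.mem_inf] at hx
    obtain ⟨hxW, hxV⟩ := hx
    rw [hW, LinearMap.mem_range] at hxW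
    obtain ⟨a, rfl⟩ := hxW
    have h1 : F (T a) ≤ lam * Nq (T a) := hVbound _ hxV
    have h2 := hWkey a
    have hSnn : (0:ℝ) ≤ ∑ i, ∑ j, (a (Q i) - a (Q j))^2 * (-(M i j * φ i * φ j)) :=
      Finset.sum_nonneg fun i _ => Finset.sum_nonneg fun j _ => hterm a i j
    have hS : ∑ i, ∑ j, (a (Q i) - a (Q j))^2 * (-(M i j * φ i * φ j)) = 0 := by
      linarith
    have hzero : ∀ i j : Fin n, (a (Q i) - a (Q j))^2 * (-(M i j * φ i * φ j)) = 0 := by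
      intro i j
      have h := (Finset.sum_eq_zero_iff_of_nonneg
        (fun i _ => Finset.sum_nonneg fun j _ => hterm a i j)).1 hS i (Finset.mem_univ i)
      exact (Finset.sum_eq_zero_iff_of_nonneg (fun j _ => hterm a i j)).1 h j (Finset.mem_univ j)
    have hadj : ∀ i j, (graphOf M).Adj i j → a (Q i) = a (Q j) := by
      intro i j hij
      by_cases hQ : Q i = Q j
      · rw [hQ]
      · have hMne : M i j ≠ 0 := by
          simp only [graphOf, SimpleGraph.fromRel_adj] at hij
          rcases hij.2 with h | h
          · exact h
          · rw [← hsymm i j]; exact h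
        have hne0 : M i j * φ i * φ j ≠ 0 :=
          mul_ne_zero (mul_ne_zero hMne (hφ i)) (hφ j)
        have hlt : M i j * φ i * φ j < 0 := lt_of_le_of_ne (hcross i j hQ) hne0
        rcases mul_eq_zero.1 (hzero i j) with h | h
        · have := pow_eq_zero_iff (n := 2) (by norm_num) |>.1 h
          linarith [sub_eq_zero.1 this]
        · exfalso; linarith
    have hconst : ∀ i j, a (Q i) = a (Q j) := by
      intro i j
      obtain ⟨w⟩ := hirr i j
      induction w with
      | nil => rfl
      | cons h p ih => exact (hadj _ _ h).trans ih
    refine Submodule.mem_span_singleton.2 ⟨a (Q ⟨0, hn⟩), ?_⟩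
    rw [← _root_.map_smul]
    congr 1
    funext c
    induction c using SimpleGraph.ConnectedComponent.ind with
    | _ i =>
      show a (Q ⟨0, hn⟩) * 1 = a (Q i)
      rw [mul_one]
      exact hconst ⟨0, hn⟩ i
  -- dimension count
  have hT1 : T (fun _ => (1:ℝ)) ≠ 0 := by
    intro hc
    have h0 : T (fun _ => (1:ℝ)) ⟨0, hn⟩ = 0 := by rw [hc]; rfl
    rw [hTapp] at h0
    rw [one_mul] at h0
    exact hφ _ h0
  have hrank := Submodule.finrank_sup_add_finrank_inf_eq W V
  have h1 : Module.finrank ℝ (W ⊔ V : Submodule ℝ (EuclideanSpace ℝ (Fin n))) ≤ n := by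
    have h := Submodule.finrank_le (W ⊔ V : Submodule ℝ (EuclideanSpace ℝ (Fin n)))
    rwa [finrank_euclideanSpace, Fintype.card_fin] at h
  have h2 : Module.finrank ℝ (W ⊓ V : Submodule ℝ (EuclideanSpace ℝ (Fin n))) ≤ 1 := by
    calc Module.finrank ℝ (W ⊓ V : Submodule ℝ (EuclideanSpace ℝ (Fin n)))
        ≤ Module.finrank ℝ (Submodule.span ℝ {T (fun _ => (1:ℝ))}) :=
          Submodule.finrank_mono hinf
      _ = 1 := finrank_span_singleton hT1
  have hNat : Nat.card G.ConnectedComponent = Fintype.card G.ConnectedComponent :=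
    Nat.card_eq_fintype_card
  rw [hNat, ← hdimW, ← hdimV]
  omega


theorem stmt18 {n : ℕ} (hn : 0 < n) {M : Matrix (Fin n) (Fin n) ℝ}
    (hM : M.IsHermitian) (hirr : (graphOf M).Connected)
    (lam : ℝ) (φ : Fin n → ℝ) (hφ : ∀ i, φ i ≠ 0)
    (heig : M.mulVec φ = lam • φ)
    (k r : ℕ)
    (hk : k = (Finset.univ.filter (fun i => hM.eigenvalues i < lam)).card + 1)
    (hr : r = (Finset.univ.filter (fun i => hM.eigenvalues i = lam)).card) :
    (k : ℤ) + ((r : ℤ) - 1) - cyclo (graphOf M)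
        + cyclo (posGraph M φ) + cyclo (negGraph M φ)
      ≤ Nat.card (negGraph M φ).ConnectedComponent := by
  -- symmetry of entries
  have hsymm : ∀ i j, M j i = M i j := by
    intro i j
    have := congrFun (congrFun hM j) i
    simpa [conjTranspose_apply] using this.symm
  -- graph decomposition
  have hdecomp : graphOf M = posGraph M φ ⊔ negGraph M φ := by
    ext i j
    simp only [graphOf, posGraph, negGraph, SimpleGraph.fromRel_adj, SimpleGraph.sup_adj]
    constructor
    · rintro ⟨hne, h⟩
      have hMij : M i j ≠ 0 := by
        rcases h with h | h
        · exact h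
        · rw [← hsymm]; exact h
      have : M i j * φ i * φ j ≠ 0 := by
        intro hc
        rcases mul_eq_zero.1 hc with hc | hc
        · rcases mul_eq_zero.1 hc with hc | hc
          · exact hMij hc
          · exact hφ i hc
        · exact hφ j hc
      rcases this.lt_or_gt with h' | h'
      · exact Or.inr ⟨hne, Or.inl h'⟩
      · exact Or.inl ⟨hne, Or.inl h'⟩
    · rintro (⟨hne, h⟩ | ⟨hne, h⟩) <;> refine ⟨hne, Or.inl ?_⟩
      · rcases h with h | h
        · intro hc; rw [hc] at h; simp at h
        · intro hc; rw [hsymm i j, hc] at h; simp at h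
      · rcases h with h | h
        · intro hc; rw [hc] at h; simp at h
        · intro hc; rw [hsymm i j, hc] at h; simp at h
  have hdisj : Disjoint (posGraph M φ) (negGraph M φ) := by
    rw [disjoint_iff]
    ext i j
    simp only [SimpleGraph.inf_adj, SimpleGraph.bot_adj, iff_false, not_and]
    intro h1 h2
    simp only [posGraph, negGraph, SimpleGraph.fromRel_adj] at h1 h2
    obtain ⟨hne, h1⟩ := h1
    obtain ⟨-, h2⟩ := h2
    have hs : M j i * φ j * φ i = M i j * φ i * φ j := by rw [hsymm i j]; ring
    rcases h1 with h1 | h1 <;> rcases h2 with h2 | h2 <;>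
      first
        | exact absurd (h1.trans h2) (lt_irrefl _)
        | (rw [hs] at * ; linarith)
  -- edge counts
  have hEfin : ∀ (G : SimpleGraph (Fin n)), G.edgeSet.Finite := fun G => Set.toFinite _
  have hcard : (graphOf M).edgeSet.ncard
      = (posGraph M φ).edgeSet.ncard + (negGraph M φ).edgeSet.ncard := by
    rw [hdecomp, SimpleGraph.edgeSet_sup]
    exact Set.ncard_union_eq (SimpleGraph.disjoint_edgeSet.2 hdisj) (hEfin _) (hEfin _)
  -- the full graph is connected: one component
  have hone : Nat.card (graphOf M).ConnectedComponent = 1 := by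
    have : Subsingleton (graphOf M).ConnectedComponent := by
      constructor
      intro a b
      induction a using SimpleGraph.ConnectedComponent.ind with
      | _ i =>
        induction b using SimpleGraph.ConnectedComponent.ind with
        | _ j => exact SimpleGraph.ConnectedComponent.sound (hirr i j)
    have : Nonempty (graphOf M).ConnectedComponent :=
      ⟨SimpleGraph.connectedComponentMk _ ⟨0, hn⟩⟩
    exact Nat.card_eq_one_iff_unique.2 ⟨‹_›, ‹_›⟩
  -- index count
  have hS : ((Finset.univ.filter (fun i => hM.eigenvalues i ≤ lam)).card : ℤ)
      = (k : ℤ) + r - 1 := by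
    have hsplit : (Finset.univ.filter (fun i => hM.eigenvalues i ≤ lam))
        = (Finset.univ.filter (fun i => hM.eigenvalues i < lam))
          ∪ (Finset.univ.filter (fun i => hM.eigenvalues i = lam)) := by
      ext i
      simp only [Finset.mem_filter, Finset.mem_union, Finset.mem_univ, true_and]
      exact le_iff_lt_or_eq
    have hd : Disjoint (Finset.univ.filter (fun i => hM.eigenvalues i < lam))
        (Finset.univ.filter (fun i => hM.eigenvalues i = lam)) := by
      rw [Finset.disjoint_left]
      intro i h1 h2
      simp only [Finset.mem_filter] at h1 h2
      exact absurd h2.2 (ne_of_lt h1.2)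
    rw [hsplit, Finset.card_union_of_disjoint hd]
    rw [hk, hr]
    push_cast
    ring
  have hkey := aux_spectral hn hM hirr lam φ hφ heig
  -- unfold cyclo and finish with arithmetic
  simp only [cyclo, hone, hcard]
  have hkey' : (Nat.card (posGraph M φ).ConnectedComponent : ℤ)
      + ((Finset.univ.filter (fun i => hM.eigenvalues i ≤ lam)).card : ℤ) ≤ (n : ℤ) + 1 := by
    exact_mod_cast hkey
  rw [hS] at hkey'
  push_cast
  linarith
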